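/- For all n ≥ 0 and all x, the Daehee polynomials of the second kind satisfy Ď_n(x) = ∑_{l=0}^{n} (-1)^l s(n,l) B_l(x), where s(n,l) are the signed Stirling numbers of the first kind and B_l(x) are the Bernoulli polynomials. -/

import Mathlib

open PowerSeries Finset

noncomputable def logOneAdd : PowerSeries ℚ :=
  PowerSeries.mk fun k => if k = 0 then 0 else (-1 : ℚ)^(k+1) / k

noncomputable def onePow (x : ℚ) : PowerSeries ℚ :=
  PowerSeries.mk fun k => (∏ i ∈ Finset.range k, (x - (i : ℚ))) / (Nat.factorial k : ℚ)

noncomputable def expX (x : ℚ) : PowerSeries ℚ :=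
  PowerSeries.mk fun k => x ^ k / (Nat.factorial k : ℚ)

namespace DaeheeAux


lemma coeff_logOneAdd (n : ℕ) :
    PowerSeries.coeff n logOneAdd = if n = 0 then 0 else (-1 : ℚ)^(n+1) / n :=
  PowerSeries.coeff_mk _ _

lemma constantCoeff_logOneAdd : PowerSeries.constantCoeff logOneAdd = 0 := by
  rw [← PowerSeries.coeff_zero_eq_constantCoeff_apply, coeff_logOneAdd]; simp

lemma coeff_logOneAdd_pow_eq_zero {m n : ℕ} (h : n < m) :
    PowerSeries.coeff n (logOneAdd ^ m) = 0 := by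
  have hd : (PowerSeries.X : PowerSeries ℚ) ∣ logOneAdd :=
    PowerSeries.X_dvd_iff.mpr constantCoeff_logOneAdd
  exact (PowerSeries.X_pow_dvd_iff.mp (pow_dvd_pow_of_dvd hd m)) n h

noncomputable def substL (f : PowerSeries ℚ) : PowerSeries ℚ :=
  PowerSeries.mk fun n =>
    ∑ m ∈ Finset.range (n+1), PowerSeries.coeff m f * PowerSeries.coeff n (logOneAdd ^ m)

lemma coeff_substL (f : PowerSeries ℚ) {n N : ℕ} (h : n < N) :
    PowerSeries.coeff n (substL f)
      = ∑ m ∈ Finset.range N, PowerSeries.coeff m f * PowerSeries.coeff n (logOneAdd ^ m) := by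
  rw [substL, PowerSeries.coeff_mk]
  refine Finset.sum_subset (Finset.range_subset_range.mpr h) ?_
  intro m hm hmn
  simp only [Finset.mem_range] at hm hmn
  rw [coeff_logOneAdd_pow_eq_zero (by omega : n < m), mul_zero]

lemma substL_mul (f g : PowerSeries ℚ) : substL (f * g) = substL f * substL g := by
  ext n
  set F : ℕ × ℕ → ℚ := fun pq =>
    PowerSeries.coeff pq.1 f * PowerSeries.coeff pq.2 g
      * PowerSeries.coeff n (logOneAdd ^ (pq.1 + pq.2)) with hF
  have hLHS : PowerSeries.coeff n (substL (f * g))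
      = ∑ m ∈ Finset.range (n+1), ∑ pq ∈ Finset.HasAntidiagonal.antidiagonal m, F pq := by
    rw [coeff_substL _ (Nat.lt_succ_self n)]
    refine Finset.sum_congr rfl fun m _ => ?_
    rw [PowerSeries.coeff_mul, Finset.sum_mul]
    refine Finset.sum_congr rfl fun pq hpq => ?_
    rw [Finset.HasAntidiagonal.mem_antidiagonal] at hpq
    rw [hF]; simp only; rw [hpq]
  have hdisj : (↑(Finset.range (n+1)) : Set ℕ).PairwiseDisjoint Finset.HasAntidiagonal.antidiagonal := by
    intro a _ b _ hab
    simp only [Finset.disjoint_left]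
    intro pq hpa hpb
    rw [Finset.HasAntidiagonal.mem_antidiagonal] at hpa hpb
    exact hab (hpa ▸ hpb)
  have hsub : (Finset.range (n+1)).biUnion Finset.HasAntidiagonal.antidiagonal
      ⊆ Finset.range (n+1) ×ˢ Finset.range (n+1) := by
    intro pq hpq
    simp only [Finset.mem_biUnion, Finset.mem_range, Finset.HasAntidiagonal.mem_antidiagonal] at hpq
    obtain ⟨m, hm, hpqm⟩ := hpq
    simp only [Finset.mem_product, Finset.mem_range]
    omega
  have hzero : ∀ pq ∈ Finset.range (n+1) ×ˢ Finset.range (n+1),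
      pq ∉ (Finset.range (n+1)).biUnion Finset.HasAntidiagonal.antidiagonal → F pq = 0 := by
    intro pq _ hpq
    have : n < pq.1 + pq.2 := by
      by_contra hle
      exact hpq (Finset.mem_biUnion.mpr ⟨pq.1 + pq.2, Finset.mem_range.mpr (by omega),
        Finset.HasAntidiagonal.mem_antidiagonal.mpr rfl⟩)
    rw [hF]; simp only
    rw [coeff_logOneAdd_pow_eq_zero this, mul_zero]
  have hRHS : PowerSeries.coeff n (substL f * substL g)
      = ∑ pq ∈ Finset.range (n+1) ×ˢ Finset.range (n+1), F pq := by
    rw [PowerSeries.coeff_mul]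
    have : ∀ ij ∈ Finset.HasAntidiagonal.antidiagonal n,
        PowerSeries.coeff ij.1 (substL f) * PowerSeries.coeff ij.2 (substL g)
          = ∑ pq ∈ Finset.range (n+1) ×ˢ Finset.range (n+1),
              PowerSeries.coeff pq.1 f * PowerSeries.coeff pq.2 g
                * (PowerSeries.coeff ij.1 (logOneAdd ^ pq.1)
                    * PowerSeries.coeff ij.2 (logOneAdd ^ pq.2)) := by
      intro ij hij
      rw [Finset.HasAntidiagonal.mem_antidiagonal] at hij
      rw [coeff_substL f (show ij.1 < n+1 by omega), coeff_substL g (show ij.2 < n+1 by omega),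
        Finset.sum_mul_sum, Finset.sum_product]
      refine Finset.sum_congr rfl fun p _ => Finset.sum_congr rfl fun q _ => by ring
    rw [Finset.sum_congr rfl this, Finset.sum_comm]
    refine Finset.sum_congr rfl fun pq _ => ?_
    rw [hF]; simp only
    rw [← Finset.mul_sum, pow_add, PowerSeries.coeff_mul, mul_assoc]
  rw [hLHS, hRHS, ← Finset.sum_biUnion hdisj]
  exact Finset.sum_subset hsub hzero
/-- ODE characterization: `(1+X) F' = c F` iff coefficient recurrence. -/
lemma ode_iff (c : ℚ) (F : PowerSeries ℚ) :
    (1 + PowerSeries.X) * (d⁄dX ℚ F) = PowerSeries.C c * F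
      ↔ ∀ n : ℕ, ((n:ℚ)+1) * PowerSeries.coeff (n+1) F = (c - n) * PowerSeries.coeff n F := by
  constructor
  · intro h n
    have := congrArg (PowerSeries.coeff n) h
    rw [add_mul, one_mul, map_add, PowerSeries.coeff_C_mul, PowerSeries.coeff_derivative] at this
    cases n with
    | zero =>
      rw [PowerSeries.coeff_zero_X_mul] at this
      push_cast
      norm_num at this ⊢
      linarith [this]
    | succ m =>
      rw [PowerSeries.coeff_succ_X_mul, PowerSeries.coeff_derivative] at this
      push_cast
      push_cast at this
      linarith [this]
  · intro h
    ext n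
    rw [add_mul, one_mul, map_add, PowerSeries.coeff_C_mul, PowerSeries.coeff_derivative]
    cases n with
    | zero =>
      rw [PowerSeries.coeff_zero_X_mul]
      have := h 0
      push_cast at this ⊢
      norm_num at this ⊢
      linarith [this]
    | succ m =>
      rw [PowerSeries.coeff_succ_X_mul, PowerSeries.coeff_derivative]
      have h1 := h (m+1)
      have h2 := h m
      push_cast at h1 h2 ⊢
      linarith [h1, h2]

lemma coeff_onePow (c : ℚ) (n : ℕ) :
    PowerSeries.coeff n (onePow c)
      = (∏ i ∈ Finset.range n, (c - (i : ℚ))) / (Nat.factorial n : ℚ) :=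
  PowerSeries.coeff_mk _ _

lemma constantCoeff_onePow (c : ℚ) : PowerSeries.constantCoeff (onePow c) = 1 := by
  rw [← PowerSeries.coeff_zero_eq_constantCoeff_apply, coeff_onePow]; simp

lemma onePow_ode (c : ℚ) :
    (1 + PowerSeries.X) * (d⁄dX ℚ (onePow c)) = PowerSeries.C c * onePow c := by
  rw [ode_iff]
  intro n
  rw [coeff_onePow, coeff_onePow, Finset.prod_range_succ, Nat.factorial_succ]
  have hn : ((n+1).factorial : ℚ) ≠ 0 := Nat.cast_ne_zero.mpr (Nat.factorial_ne_zero _)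
  have hn' : ((n).factorial : ℚ) ≠ 0 := Nat.cast_ne_zero.mpr (Nat.factorial_ne_zero _)
  field_simp
  push_cast
  ring

lemma ode_unique (c : ℚ) (F : PowerSeries ℚ)
    (h : (1 + PowerSeries.X) * (d⁄dX ℚ F) = PowerSeries.C c * F)
    (h0 : PowerSeries.constantCoeff F = 1) : F = onePow c := by
  rw [ode_iff] at h
  ext n
  induction n with
  | zero =>
    simp only [PowerSeries.coeff_zero_eq_constantCoeff_apply, h0, constantCoeff_onePow]
  | succ m ih =>
    have h1 := h m
    have h2 : ((m:ℚ)+1) * PowerSeries.coeff (m+1) (onePow c)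
        = (c - m) * PowerSeries.coeff m (onePow c) := by
      have := (ode_iff c (onePow c)).mp (onePow_ode c)
      exact this m
    have hm : ((m:ℚ)+1) ≠ 0 := by positivity
    rw [ih] at h1
    field_simp at h1 h2
    rw [← h2] at h1
    exact mul_left_cancel₀ hm h1
lemma coeff_expX (x : ℚ) (n : ℕ) :
    PowerSeries.coeff n (expX x) = x ^ n / (Nat.factorial n : ℚ) :=
  PowerSeries.coeff_mk _ _

lemma one_add_X_mul_dL : (1 + PowerSeries.X) * (d⁄dX ℚ logOneAdd) = 1 := by
  ext n
  rw [add_mul, one_mul, map_add]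
  cases n with
  | zero =>
    rw [PowerSeries.coeff_zero_X_mul, PowerSeries.coeff_derivative, coeff_logOneAdd]
    norm_num
  | succ m =>
    rw [PowerSeries.coeff_succ_X_mul, PowerSeries.coeff_derivative, PowerSeries.coeff_derivative,
      coeff_logOneAdd, coeff_logOneAdd, PowerSeries.coeff_one]
    have h1 : ((m:ℚ)+1) ≠ 0 := by positivity
    have h2 : ((m:ℚ)+2) ≠ 0 := by positivity
    simp only [Nat.succ_ne_zero, if_false, Nat.add_eq_zero, and_false]
    push_cast
    field_simp
    ring

lemma coeff_mul_substL (g f : PowerSeries ℚ) (n : ℕ) :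
    PowerSeries.coeff n (g * substL f)
      = ∑ k ∈ Finset.range (n+1),
          PowerSeries.coeff k f * PowerSeries.coeff n (g * logOneAdd ^ k) := by
  rw [PowerSeries.coeff_mul]
  have : ∀ ij ∈ Finset.HasAntidiagonal.antidiagonal n,
      PowerSeries.coeff ij.1 g * PowerSeries.coeff ij.2 (substL f)
        = ∑ k ∈ Finset.range (n+1),
            PowerSeries.coeff k f
              * (PowerSeries.coeff ij.1 g * PowerSeries.coeff ij.2 (logOneAdd ^ k)) := by
    intro ij hij
    rw [Finset.HasAntidiagonal.mem_antidiagonal] at hij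
    rw [coeff_substL f (show ij.2 < n+1 by omega), Finset.mul_sum]
    exact Finset.sum_congr rfl fun k _ => by ring
  rw [Finset.sum_congr rfl this, Finset.sum_comm]
  exact Finset.sum_congr rfl fun k _ => by rw [← Finset.mul_sum, PowerSeries.coeff_mul]

lemma deriv_substL_expX (x : ℚ) :
    d⁄dX ℚ (substL (expX x))
      = PowerSeries.C x * (d⁄dX ℚ logOneAdd) * substL (expX x) := by
  ext n
  have hR : PowerSeries.coeff n (PowerSeries.C x * (d⁄dX ℚ logOneAdd) * substL (expX x))
      = ∑ k ∈ Finset.range (n+1),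
          x * (PowerSeries.coeff k (expX x)
            * PowerSeries.coeff n ((d⁄dX ℚ logOneAdd) * logOneAdd ^ k)) := by
    rw [mul_assoc, PowerSeries.coeff_C_mul, coeff_mul_substL, Finset.mul_sum]
  have hL : PowerSeries.coeff n (d⁄dX ℚ (substL (expX x)))
      = ∑ k ∈ Finset.range (n+1),
          PowerSeries.coeff (k+1) (expX x) * ((k:ℚ)+1)
            * PowerSeries.coeff n (logOneAdd ^ k * d⁄dX ℚ logOneAdd) := by
    rw [PowerSeries.coeff_derivative, coeff_substL _ (Nat.lt_succ_self (n+1)), Finset.sum_mul,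
      Finset.sum_range_succ']
    have h0 : PowerSeries.coeff 0 (expX x) * PowerSeries.coeff (n+1) (logOneAdd ^ 0)
        * ((n:ℚ)+1) = 0 := by
      rw [pow_zero, PowerSeries.coeff_one]; simp
    rw [h0, add_zero]
    refine Finset.sum_congr rfl fun k _ => ?_
    have hd : PowerSeries.coeff (n+1) (logOneAdd ^ (k+1)) * ((n:ℚ)+1)
        = PowerSeries.coeff n (d⁄dX ℚ (logOneAdd ^ (k+1))) := by
      rw [PowerSeries.coeff_derivative]
    rw [mul_assoc, hd, Derivation.leibniz_pow]
    simp only [Nat.add_sub_cancel]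
    rw [map_nsmul, nsmul_eq_mul]
    simp only [smul_eq_mul]
    push_cast
    ring
  rw [hL, hR]
  refine Finset.sum_congr rfl fun k _ => ?_
  rw [coeff_expX, coeff_expX, mul_comm (logOneAdd ^ k)]
  have hfs : ((k+1 : ℕ).factorial : ℚ) = ((k:ℚ)+1) * (Nat.factorial k : ℚ) := by
    rw [Nat.factorial_succ]; push_cast; ring
  rw [hfs]
  have hk : ((k:ℚ)+1) ≠ 0 := by positivity
  have hf : ((Nat.factorial k : ℚ)) ≠ 0 := Nat.cast_ne_zero.mpr (Nat.factorial_ne_zero _)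
  field_simp
  ring

lemma constantCoeff_substL_expX (x : ℚ) :
    PowerSeries.constantCoeff (substL (expX x)) = 1 := by
  rw [← PowerSeries.coeff_zero_eq_constantCoeff_apply, coeff_substL _ (Nat.lt_succ_self 0)]
  simp [coeff_expX]

lemma substL_expX (x : ℚ) : substL (expX x) = onePow x := by
  refine ode_unique x _ ?_ (constantCoeff_substL_expX x)
  rw [deriv_substL_expX]
  calc (1 + PowerSeries.X) * (PowerSeries.C x * (d⁄dX ℚ logOneAdd) * substL (expX x))
      = PowerSeries.C x * ((1 + PowerSeries.X) * (d⁄dX ℚ logOneAdd)) * substL (expX x) := by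
        ring
    _ = PowerSeries.C x * substL (expX x) := by rw [one_add_X_mul_dL, mul_one]

lemma onePow_mul (a b : ℚ) : onePow a * onePow b = onePow (a + b) := by
  refine ode_unique (a+b) _ ?_ (by rw [map_mul, constantCoeff_onePow, constantCoeff_onePow, mul_one])
  rw [Derivation.leibniz]
  calc (1 + PowerSeries.X) * (onePow a • d⁄dX ℚ (onePow b) + onePow b • d⁄dX ℚ (onePow a))
      = onePow a * ((1 + PowerSeries.X) * d⁄dX ℚ (onePow b))
        + onePow b * ((1 + PowerSeries.X) * d⁄dX ℚ (onePow a)) := by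
        simp only [smul_eq_mul]; ring
    _ = PowerSeries.C (a+b) * (onePow a * onePow b) := by
        rw [onePow_ode, onePow_ode, map_add]; ring

lemma onePow_one : onePow 1 = 1 + PowerSeries.X := by
  ext n
  rw [onePow, PowerSeries.coeff_mk, map_add, PowerSeries.coeff_one, PowerSeries.coeff_X]
  match n with
  | 0 => norm_num
  | 1 => norm_num
  | (m+2) =>
    rw [Finset.prod_eq_zero (Finset.mem_range.mpr (show 1 < m+2 by omega)) (by norm_num)]
    rw [if_neg (by omega), if_neg (by omega)]
    norm_num

lemma exp_eq_expX_one : PowerSeries.exp ℚ = expX 1 := by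
  ext n
  rw [PowerSeries.coeff_exp, coeff_expX, one_pow]
  simp [algebraMap]

lemma substL_sub (f g : PowerSeries ℚ) : substL (f - g) = substL f - substL g := by
  ext n
  rw [map_sub, substL, substL, substL, PowerSeries.coeff_mk, PowerSeries.coeff_mk,
    PowerSeries.coeff_mk, ← Finset.sum_sub_distrib]
  exact Finset.sum_congr rfl fun m _ => by rw [map_sub, sub_mul]

lemma substL_one : substL (1 : PowerSeries ℚ) = 1 := by
  ext n
  rw [substL, PowerSeries.coeff_mk]
  rw [Finset.sum_eq_single 0]
  · rw [pow_zero, PowerSeries.coeff_one, PowerSeries.coeff_one]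
    simp
  · intro m _ hm
    rw [PowerSeries.coeff_one, if_neg hm, zero_mul]
  · intro h
    simp at h

lemma substL_X : substL (PowerSeries.X : PowerSeries ℚ) = logOneAdd := by
  ext n
  rw [substL, PowerSeries.coeff_mk]
  rw [Finset.sum_eq_single 1]
  · rw [PowerSeries.coeff_X, if_pos rfl, pow_one, one_mul]
  · intro m _ hm
    rw [PowerSeries.coeff_X, if_neg hm, zero_mul]
  · intro h
    simp only [Finset.mem_range, not_lt] at h
    have hn : n = 0 := by omega
    subst hn
    simp [coeff_logOneAdd]
lemma poly_coeff_extract (a b : ℕ → ℚ) (n : ℕ)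
    (h : ∀ x : ℚ, ∑ l ∈ Finset.range (n+1), a l * x^l = ∑ l ∈ Finset.range (n+1), b l * x^l) :
    ∀ m, m < n+1 → a m = b m := by
  have hpq : (∑ l ∈ Finset.range (n+1), Polynomial.C (a l) * Polynomial.X^l)
      = ∑ l ∈ Finset.range (n+1), Polynomial.C (b l) * Polynomial.X^l := by
    apply Polynomial.funext
    intro x
    rw [Polynomial.eval_finset_sum, Polynomial.eval_finset_sum]
    simpa using h x
  intro m hm
  have h2 := congrArg (fun p => Polynomial.coeff p m) hpq
  simpa [Polynomial.finset_sum_coeff, Polynomial.coeff_C_mul, Polynomial.coeff_X_pow,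
    Finset.sum_ite_eq, Finset.mem_range, hm] using h2

lemma expX_eq_rescale (a : ℚ) : expX a = PowerSeries.rescale a (PowerSeries.exp ℚ) := by
  ext n
  rw [coeff_expX, PowerSeries.coeff_rescale, PowerSeries.coeff_exp]
  simp [algebraMap]
  ring

lemma expX_mul (a b : ℚ) : expX a * expX b = expX (a + b) := by
  rw [expX_eq_rescale, expX_eq_rescale, expX_eq_rescale, PowerSeries.exp_mul_exp_eq_exp_add]

lemma expX_zero : expX 0 = 1 := by
  ext n
  rw [coeff_expX, PowerSeries.coeff_one]
  cases n <;> simp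

lemma rescale_neg_one_mk (f : ℕ → ℚ) :
    PowerSeries.rescale (-1 : ℚ) (PowerSeries.mk f)
      = PowerSeries.mk fun n => (-1 : ℚ)^n * f n := by
  ext n
  rw [PowerSeries.coeff_rescale, PowerSeries.coeff_mk, PowerSeries.coeff_mk]

lemma rescale_neg_one_X :
    PowerSeries.rescale (-1 : ℚ) PowerSeries.X = -PowerSeries.X := by
  ext n
  rw [PowerSeries.coeff_rescale, map_neg, PowerSeries.coeff_X]
  split_ifs with h
  · subst h; norm_num
  · norm_num

lemma rescale_neg_one_expX (x : ℚ) :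
    PowerSeries.rescale (-1 : ℚ) (expX x) = expX (-x) := by
  ext n
  rw [PowerSeries.coeff_rescale, coeff_expX, coeff_expX, neg_pow]
  ring

lemma one_sub_expX_one_ne_zero : (1 : PowerSeries ℚ) - expX 1 ≠ 0 := by
  intro h
  have := congrArg (PowerSeries.coeff 1) h
  rw [map_sub, PowerSeries.coeff_one, coeff_expX] at this
  norm_num at this

lemma reflection (Bp : ℕ → ℚ → ℚ)
    (hBp : ∀ x : ℚ, PowerSeries.mk (fun m => Bp m x / (Nat.factorial m : ℚ))
      * (PowerSeries.exp ℚ - 1) = PowerSeries.X * expX x) :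
    ∀ (m : ℕ) (x : ℚ), Bp m (1 - x) = (-1 : ℚ)^m * Bp m x := by
  intro m x
  have h1 := congrArg (PowerSeries.rescale (-1 : ℚ)) (hBp x)
  rw [map_mul, map_mul, map_sub, map_one, rescale_neg_one_mk, rescale_neg_one_X,
    exp_eq_expX_one, rescale_neg_one_expX, rescale_neg_one_expX] at h1
  -- h1 : mk ((-1)^m * Bp m x / m!) * (expX (-1) - 1) = -X * expX (-x)
  have h2 := congrArg (· * expX 1) h1
  rw [mul_assoc, sub_mul, one_mul, expX_mul, neg_add_cancel, expX_zero] at h2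
  -- h2 : mk (...) * (1 - expX 1) = -X * expX (-x) * expX 1
  rw [mul_assoc, expX_mul] at h2
  have hx : -x + 1 = 1 - x := by ring
  rw [hx, neg_mul] at h2
  have h3 := hBp (1 - x)
  rw [exp_eq_expX_one] at h3
  have h4 : PowerSeries.mk (fun k => (-1 : ℚ)^k * (Bp k x / (Nat.factorial k : ℚ)))
      * (1 - expX 1)
      = PowerSeries.mk (fun k => Bp k (1-x) / (Nat.factorial k : ℚ)) * (1 - expX 1) := by
    rw [h2, ← h3]
    ring
  have h5 := mul_right_cancel₀ one_sub_expX_one_ne_zero h4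
  have h6 := congrArg (PowerSeries.coeff m) h5
  rw [PowerSeries.coeff_mk, PowerSeries.coeff_mk] at h6
  have hf : ((Nat.factorial m : ℚ)) ≠ 0 := Nat.cast_ne_zero.mpr (Nat.factorial_ne_zero _)
  field_simp at h6
  rw [h6]

end DaeheeAux

open DaeheeAux in
theorem daehee2_poly_stirling_bernoulli (Dhp Bp : ℕ → ℚ → ℚ) (s : ℕ → ℕ → ℚ)
    (hDhp : ∀ x : ℚ, PowerSeries.mk (fun n => Dhp n x / (Nat.factorial n : ℚ)) * PowerSeries.X * onePow x = (1 + PowerSeries.X) * logOneAdd) (hBp : ∀ x : ℚ, PowerSeries.mk (fun m => Bp m x / (Nat.factorial m : ℚ)) * (PowerSeries.exp ℚ - 1) = PowerSeries.X * expX x) (hs : ∀ (n : ℕ) (x : ℚ), ∏ i ∈ Finset.range n, (x - (i : ℚ)) = ∑ l ∈ Finset.range (n + 1), s n l * x ^ l) :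
    ∀ (n : ℕ) (x : ℚ), Dhp n x = ∑ l ∈ Finset.range (n + 1), (-1 : ℚ) ^ l * s n l * Bp l x := by
  intro n x
  have hfn : ((Nat.factorial n : ℚ)) ≠ 0 := Nat.cast_ne_zero.mpr (Nat.factorial_ne_zero _)
  -- Stirling connection: coeff n (L^m) = s n m * m! / n!
  have hLpow : ∀ m, m < n+1 → PowerSeries.coeff n (logOneAdd ^ m)
      = s n m * (Nat.factorial m : ℚ) / (Nat.factorial n : ℚ) := by
    have hx : ∀ y : ℚ,
        ∑ l ∈ Finset.range (n+1), (s n l / (Nat.factorial n : ℚ)) * y^l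
          = ∑ m ∈ Finset.range (n+1),
              (PowerSeries.coeff n (logOneAdd^m) / (Nat.factorial m : ℚ)) * y^m := by
      intro y
      have h1 : PowerSeries.coeff n (onePow y)
          = PowerSeries.coeff n (substL (expX y)) := by rw [substL_expX]
      rw [coeff_onePow, coeff_substL _ (Nat.lt_succ_self n), hs n y, Finset.sum_div] at h1
      calc ∑ l ∈ Finset.range (n+1), (s n l / (Nat.factorial n : ℚ)) * y^l
          = ∑ l ∈ Finset.range (n+1), s n l * y ^ l / (Nat.factorial n : ℚ) := by
            exact Finset.sum_congr rfl fun l _ => by ring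
        _ = ∑ m ∈ Finset.range (n+1),
              PowerSeries.coeff m (expX y) * PowerSeries.coeff n (logOneAdd ^ m) := h1
        _ = ∑ m ∈ Finset.range (n+1),
              (PowerSeries.coeff n (logOneAdd^m) / (Nat.factorial m : ℚ)) * y^m := by
            refine Finset.sum_congr rfl fun m _ => ?_
            rw [coeff_expX]
            ring
    intro m hm
    have h2 := poly_coeff_extract _ _ n hx m hm
    have hfm : ((Nat.factorial m : ℚ)) ≠ 0 := Nat.cast_ne_zero.mpr (Nat.factorial_ne_zero _)
    field_simp at h2 ⊢
    linarith [h2]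
  -- substituted Bernoulli generating function
  have hsubB : ∀ y : ℚ,
      substL (PowerSeries.mk fun m => Bp m y / (Nat.factorial m : ℚ)) * PowerSeries.X
        = logOneAdd * onePow y := by
    intro y
    have h1 := congrArg substL (hBp y)
    rw [substL_mul, substL_mul, substL_sub, substL_one, exp_eq_expX_one, substL_expX,
      onePow_one, substL_X, substL_expX] at h1
    have : (1 + PowerSeries.X) - 1 = (PowerSeries.X : PowerSeries ℚ) := by ring
    rw [this] at h1
    exact h1
  -- main cancellation
  have honePow_ne : ∀ y : ℚ, onePow y ≠ 0 := by
    intro y h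
    have := congrArg (PowerSeries.constantCoeff) h
    rw [constantCoeff_onePow, map_zero] at this
    norm_num at this
  have hG : PowerSeries.mk (fun k => Dhp k x / (Nat.factorial k : ℚ))
      = substL (PowerSeries.mk fun m => Bp m (1-x) / (Nat.factorial m : ℚ)) := by
    have hD := hDhp x
    have hB := hsubB (1-x)
    have hkey : PowerSeries.mk (fun k => Dhp k x / (Nat.factorial k : ℚ)) * PowerSeries.X * onePow x
        = substL (PowerSeries.mk fun m => Bp m (1-x) / (Nat.factorial m : ℚ))
            * PowerSeries.X * onePow x := by
      rw [hD]
      calc (1 + PowerSeries.X) * logOneAdd = onePow 1 * logOneAdd := by rw [onePow_one]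
        _ = (onePow x * onePow (1-x)) * logOneAdd := by
            rw [onePow_mul, show x + (1-x) = 1 by ring]
        _ = (logOneAdd * onePow (1-x)) * onePow x := by ring
        _ = (substL (PowerSeries.mk fun m => Bp m (1-x) / (Nat.factorial m : ℚ))
              * PowerSeries.X) * onePow x := by rw [hB]
    have h2 := mul_right_cancel₀ (honePow_ne x) hkey
    exact mul_right_cancel₀ PowerSeries.X_ne_zero h2
  have hrefl := reflection Bp hBp
  have hc := congrArg (PowerSeries.coeff n) hG
  rw [PowerSeries.coeff_mk, coeff_substL _ (Nat.lt_succ_self n)] at hc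
  have hc2 : Dhp n x / (Nat.factorial n : ℚ)
      = (∑ m ∈ Finset.range (n+1), (-1 : ℚ)^m * s n m * Bp m x) / (Nat.factorial n : ℚ) := by
    rw [hc, Finset.sum_div]
    refine Finset.sum_congr rfl fun m hm => ?_
    rw [Finset.mem_range] at hm
    rw [PowerSeries.coeff_mk, hLpow m hm, hrefl m x]
    have hfm : ((Nat.factorial m : ℚ)) ≠ 0 := Nat.cast_ne_zero.mpr (Nat.factorial_ne_zero _)
    field_simp
  have := congrArg (fun z : ℚ => z * (Nat.factorial n : ℚ)) hc2
  simpa [div_mul_cancel₀, hfn] using this
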